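/- Let P be the probability measure on {−1,0,1}³ that assigns probability 1/6 to each of the six triples (−1,0,1), (1,−1,0), (0,1,−1), (1,0,−1), (−1,1,0), (0,−1,1) and probability 0 to all other triples, and let X, Y, Z be the coordinate random variables. Then E[X] = E[Y] = E[Z] = 0, Var(X) = Var(Y) = Var(Z) = 2/3, Cov(X,Y) = Cov(Y,Z) = Cov(X,Z) = −1/3, and hence ρ(X,Y) = ρ(Y,Z) = ρ(X,Z) = −1/2, so that ρ(X,Y) + ρ(Y,Z) + ρ(X,Z) = −3/2 < −1. Consequently, for three-valued random variables with zero means, the inequality −1 ≤ ρ(X,Y) + ρ(Y,Z) + ρ(X,Z) is not necessary for the existence of a joint probability distribution. -/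
import Mathlib
set_option maxHeartbeats 1000000


open scoped Classical

/-- The sample space `{-1,0,1}³` with coordinates `X, Y, Z`. -/
abbrev TernTriple : Type :=
  ({-1, 0, 1} : Finset ℝ) × ({-1, 0, 1} : Finset ℝ) × ({-1, 0, 1} : Finset ℝ)

lemma univ3_aux : (Finset.univ : Finset ({-1, 0, 1} : Finset ℝ)) =
    {⟨-1, by norm_num⟩, ⟨0, by norm_num⟩, ⟨1, by norm_num⟩} := by
  ext a
  have h := a.2
  simp only [Finset.mem_insert, Finset.mem_singleton] at h ⊢
  simp only [Subtype.ext_iff]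
  simp only [Finset.mem_univ, true_iff]
  exact h

lemma sum3_aux (g : ({-1, 0, 1} : Finset ℝ) → ℝ) :
    (∑ x, g x) = g ⟨-1, by norm_num⟩ + g ⟨0, by norm_num⟩ + g ⟨1, by norm_num⟩ := by
  rw [univ3_aux, Finset.sum_insert (by simp [Subtype.ext_iff]; norm_num),
    Finset.sum_insert (by simp [Subtype.ext_iff]), Finset.sum_singleton, add_assoc]

/-- Counterexample for three-valued random variables: the probability distribution on
`{-1,0,1}³` assigning `1/6` to each of the six triples `(-1,0,1), (1,-1,0), (0,1,-1),
(1,0,-1), (-1,1,0), (0,-1,1)` has zero means, variances `2/3`, covariances `-1/3`, hence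
all three correlations equal to `-1/2`, whose sum `-3/2` is `< -1`. -/
theorem three_valued_correlation_counterexample
    (p : TernTriple → ℝ)
    (hp : ∀ s : TernTriple, p s =
      if ((s.1 : ℝ), (s.2.1 : ℝ), (s.2.2 : ℝ)) ∈
          ({(-1, 0, 1), (1, -1, 0), (0, 1, -1), (1, 0, -1), (-1, 1, 0), (0, -1, 1)} :
            Set (ℝ × ℝ × ℝ))
        then 1/6 else 0) :
    (∀ s, 0 ≤ p s) ∧ (∑ s, p s = 1) ∧
    -- zero means
    (∑ s, p s * (s.1 : ℝ)) = 0 ∧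
    (∑ s, p s * (s.2.1 : ℝ)) = 0 ∧
    (∑ s, p s * (s.2.2 : ℝ)) = 0 ∧
    -- variances 2/3
    (∑ s, p s * (s.1 : ℝ) ^ 2) - (∑ s, p s * (s.1 : ℝ)) ^ 2 = 2/3 ∧
    (∑ s, p s * (s.2.1 : ℝ) ^ 2) - (∑ s, p s * (s.2.1 : ℝ)) ^ 2 = 2/3 ∧
    (∑ s, p s * (s.2.2 : ℝ) ^ 2) - (∑ s, p s * (s.2.2 : ℝ)) ^ 2 = 2/3 ∧
    -- covariances -1/3
    (∑ s, p s * ((s.1 : ℝ) * (s.2.1 : ℝ))) -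
      (∑ s, p s * (s.1 : ℝ)) * (∑ s, p s * (s.2.1 : ℝ)) = -1/3 ∧
    (∑ s, p s * ((s.2.1 : ℝ) * (s.2.2 : ℝ))) -
      (∑ s, p s * (s.2.1 : ℝ)) * (∑ s, p s * (s.2.2 : ℝ)) = -1/3 ∧
    (∑ s, p s * ((s.1 : ℝ) * (s.2.2 : ℝ))) -
      (∑ s, p s * (s.1 : ℝ)) * (∑ s, p s * (s.2.2 : ℝ)) = -1/3 ∧
    -- correlations -1/2
    (-1/3 : ℝ) / (Real.sqrt (2/3) * Real.sqrt (2/3)) = -1/2 ∧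
    -- the sum of the correlations is -3/2 < -1
    (-1/2 : ℝ) + (-1/2) + (-1/2) = -3/2 ∧ (-3/2 : ℝ) < -1 := by
  have hcorr : (-1/3 : ℝ) / (Real.sqrt (2/3) * Real.sqrt (2/3)) = -1/2 := by
    rw [Real.mul_self_sqrt (by norm_num)]; norm_num
  refine ⟨?_, ?_, ?_, ?_, ?_, ?_, ?_, ?_, ?_, ?_, ?_, hcorr, by norm_num, by norm_num⟩
  · intro s
    rw [hp s]
    split <;> norm_num
  all_goals
    simp only [hp, Fintype.sum_prod_type, sum3_aux]
    norm_num [Set.mem_insert_iff, Set.mem_singleton_iff, Prod.ext_iff]
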